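/- Let n ≥ 3 and let S_n be the star graph on vertex set {1,2,…,n} centered at vertex 2 (its edges are {2, j} for all j ≠ 2). Regard Sh[v̄_{NC1}](1) as a (polynomial) function of the reliability vector p, and let p ∈ (0,1]^n. Then ∂Sh[v̄_{NC1}](1)/∂p_2 ≤ −p_1/2, while for every j ∉ {1,2}, ∂Sh[v̄_{NC1}](1)/∂p_j > −p_1/2. -/

import Mathlib

open Finset

attribute [local instance] Classical.propDecidable

noncomputable section

/-- `Π_{T,S}(p) = (∏_{i∈T} p i) * (∏_{i∈S\T} (1 - p i))`. -/
def prodPi {α : Type*} (p : α → ℝ) (T S : Finset α) : ℝ :=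
  (∏ i ∈ T, p i) * (∏ i ∈ S \ T, (1 - p i))

/-- Reliability extension of a TU-game. -/
def relExt {α : Type*} (p : α → ℝ) (v : Finset α → ℝ) (S : Finset α) : ℝ :=
  ∑ T ∈ S.powerset, v T * prodPi p T S

/-- The set of players preceding `x` in the ordering `σ`. -/
def precedingSet {α : Type*} [Fintype α] (σ : Fin (Fintype.card α) ≃ α) (x : α) : Finset α :=
  Finset.univ.filter fun y => σ.symm y < σ.symm x

/-- The Shapley value of player `x` in the TU-game `v`. -/
def shapley {α : Type*} [Fintype α] (v : Finset α → ℝ) (x : α) : ℝ :=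
  (1 / ((Fintype.card α).factorial : ℝ)) *
    ∑ σ : Fin (Fintype.card α) ≃ α,
      (v (insert x (precedingSet σ x)) - v (precedingSet σ x))

/-- The (open) neighborhood of `v` as a finset. -/
def nbhd {α : Type*} [Fintype α] (G : SimpleGraph α) (v : α) : Finset α :=
  Finset.univ.filter fun y => G.Adj v y

/-- `N̂(v) = {v} ∪ N(v)`. -/
def closedNbhd {α : Type*} [Fintype α] (G : SimpleGraph α) (v : α) : Finset α :=
  insert v (nbhd G v)

/-- `δ(S)`: vertices outside `S` having a neighbor in `S`. -/
def extBoundary {α : Type*} [Fintype α] (G : SimpleGraph α) (S : Finset α) : Finset α :=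
  Finset.univ.filter fun y => y ∉ S ∧ ∃ x ∈ S, G.Adj x y

/-- The network centrality game `Γ_{NC1}`: `v(S) = |S ∪ δ(S)|`. -/
def vNC1 {α : Type*} [Fintype α] (G : SimpleGraph α) (S : Finset α) : ℝ :=
  ((S ∪ extBoundary G S).card : ℝ)

/-- The star graph on `Fin n` centered at `c`. -/
def starGraph (n : ℕ) (c : Fin n) : SimpleGraph (Fin n) :=
  SimpleGraph.fromRel (fun i _ => i = c)

section Aux
attribute [-instance] instDecidableEqFin


lemma star_adj {n : ℕ} (c a b : Fin n) :
    (starGraph n c).Adj a b ↔ a ≠ b ∧ (a = c ∨ b = c) := by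
  constructor
  · rintro ⟨h1, h2 | h2⟩ <;> exact ⟨h1, by tauto⟩
  · rintro ⟨h1, h2⟩; exact ⟨h1, by tauto⟩

lemma mem_extB {n : ℕ} {c : Fin n} {S : Finset (Fin n)} {y : Fin n} :
    y ∈ extBoundary (starGraph n c) S ↔ y ∉ S ∧ ∃ x ∈ S, (starGraph n c).Adj x y := by
  simp [extBoundary]

lemma vNC1_star_center {n : ℕ} {c : Fin n} {S : Finset (Fin n)} (hc : c ∈ S) :
    vNC1 (starGraph n c) S = n := by
  rw [vNC1]
  norm_cast
  conv_rhs => rw [← Fintype.card_fin n]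
  rw [Finset.card_eq_iff_eq_univ]
  ext y
  simp only [mem_union, mem_univ, iff_true]
  by_cases hy : y ∈ S
  · exact Or.inl hy
  · exact Or.inr (mem_extB.2 ⟨hy, c, hc, (star_adj c c y).2 ⟨fun h => hy (h ▸ hc), Or.inl rfl⟩⟩)

lemma vNC1_star_noncenter {n : ℕ} {c : Fin n} {S : Finset (Fin n)} (hc : c ∉ S)
    (hS : S.Nonempty) : vNC1 (starGraph n c) S = S.card + 1 := by
  rw [vNC1]
  norm_cast
  rw [← Finset.card_insert_of_notMem hc]
  congr 1
  · ext y
    simp only [mem_union, mem_insert]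
    constructor
    · rintro (h | h)
      · exact Or.inr h
      · rcases mem_extB.1 h with ⟨hy, a, ha, hadj⟩
        rcases (star_adj c a y).1 hadj with ⟨-, h | h⟩
        · exact absurd (h ▸ ha) hc
        · exact Or.inl h
    · rintro (rfl | h)
      · obtain ⟨a, ha⟩ := hS
        exact Or.inr (mem_extB.2 ⟨hc, a, ha, (star_adj y a y).2 ⟨fun h => hc (h ▸ ha), Or.inr rfl⟩⟩)
      · exact Or.inl h

lemma vNC1_empty {n : ℕ} {c : Fin n} : vNC1 (starGraph n c) ∅ = 0 := by
  rw [vNC1]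
  norm_cast
  rw [Finset.card_eq_zero]
  ext y
  simp only [Finset.notMem_empty, mem_union, iff_false]
  rintro (h | h)
  · exact h
  · rcases mem_extB.1 h with ⟨-, a, ha, -⟩
    exact absurd ha (notMem_empty a)

lemma star_marg {n : ℕ} {c x : Fin n} (hxc : x ≠ c) {T : Finset (Fin n)} (hx : x ∉ T) :
    vNC1 (starGraph n c) (insert x T) - vNC1 (starGraph n c) T
      = (if c ∈ T then 0 else 1) + (if T = ∅ then 1 else 0) := by
  by_cases hc : c ∈ T
  · rw [vNC1_star_center (mem_insert_of_mem hc), vNC1_star_center hc]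
    simp [hc, ne_empty_of_mem hc]
  · by_cases hT : T = ∅
    · subst hT
      rw [vNC1_empty, vNC1_star_noncenter (by simp [Ne.symm hxc]) ⟨x, by simp⟩]
      simp
    · have hc2 : c ∉ insert x T := by simp [hc, Ne.symm hxc]
      rw [vNC1_star_noncenter hc2 ⟨x, mem_insert_self _ _⟩,
        vNC1_star_noncenter hc (Finset.nonempty_iff_ne_empty.2 hT),
        Finset.card_insert_of_notMem hx]
      simp [hc, hT]


lemma sum_prodPi {α : Type*} (p : α → ℝ) (S : Finset α) :
    ∑ T ∈ S.powerset, prodPi p T S = 1 := by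
  simp only [prodPi]
  rw [← Finset.prod_add]
  simp

lemma prodPi_right_insert {α : Type*} (p : α → ℝ) {x : α} {S T : Finset α}
    (hx : x ∉ S) (hT : T ⊆ S) :
    prodPi p T (insert x S) = (1 - p x) * prodPi p T S := by
  have hxT : x ∉ T := fun h => hx (hT h)
  have hset : (insert x S) \ T = insert x (S \ T) := by
    ext y
    simp only [mem_sdiff, mem_insert]
    constructor
    · rintro ⟨h1 | h1, h2⟩
      · exact Or.inl h1
      · exact Or.inr ⟨h1, h2⟩
    · rintro (rfl | ⟨h1, h2⟩)
      · exact ⟨Or.inl rfl, hxT⟩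
      · exact ⟨Or.inr h1, h2⟩
  rw [prodPi, prodPi, hset, Finset.prod_insert (by simp [hx])]
  ring

lemma prodPi_both_insert {α : Type*} (p : α → ℝ) {x : α} {S T : Finset α}
    (hx : x ∉ S) (hT : T ⊆ S) :
    prodPi p (insert x T) (insert x S) = p x * prodPi p T S := by
  have hxT : x ∉ T := fun h => hx (hT h)
  have hset : (insert x S) \ (insert x T) = S \ T := by
    ext y
    simp only [mem_sdiff, mem_insert, not_or]
    constructor
    · rintro ⟨h1 | h1, h2, h3⟩
      · exact absurd h1 h2
      · exact ⟨h1, h3⟩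
    · rintro ⟨h1, h2⟩
      exact ⟨Or.inr h1, fun h => hx (h ▸ h1), h2⟩
  rw [prodPi, prodPi, hset, Finset.prod_insert hxT]
  ring

lemma prodPi_erase {α : Type*} (p : α → ℝ) {c : α} {S T : Finset α}
    (hc : c ∈ S) (hT : T ⊆ S.erase c) :
    prodPi p T S = (1 - p c) * prodPi p T (S.erase c) := by
  have hcT : c ∉ T := fun h => (Finset.mem_erase.1 (hT h)).1 rfl
  have hset : S \ T = insert c ((S.erase c) \ T) := by
    ext y
    simp only [mem_sdiff, mem_insert, Finset.mem_erase]
    constructor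
    · rintro ⟨h1, h2⟩
      by_cases hyc : y = c
      · exact Or.inl hyc
      · exact Or.inr ⟨⟨hyc, h1⟩, h2⟩
    · rintro (rfl | ⟨⟨-, h1⟩, h2⟩)
      · exact ⟨hc, hcT⟩
      · exact ⟨h1, h2⟩
  have hcnot : c ∉ (S.erase c) \ T := by simp
  rw [prodPi, prodPi, hset, Finset.prod_insert hcnot]
  ring


lemma relExt_marg {n : ℕ} (p : Fin n → ℝ) {c x : Fin n} (hxc : x ≠ c)
    {S : Finset (Fin n)} (hx : x ∉ S) :
    relExt p (vNC1 (starGraph n c)) (insert x S) - relExt p (vNC1 (starGraph n c)) S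
      = p x * ((if c ∈ S then 1 - p c else 1) + ∏ i ∈ S, (1 - p i)) := by
  set v := vNC1 (starGraph n c) with hv
  rw [relExt, relExt, Finset.sum_powerset_insert hx]
  have e1 : ∑ T ∈ S.powerset, v T * prodPi p T (insert x S)
      = (1 - p x) * ∑ T ∈ S.powerset, v T * prodPi p T S := by
    rw [Finset.mul_sum]
    refine Finset.sum_congr rfl fun T hT => ?_
    rw [prodPi_right_insert p hx (Finset.mem_powerset.1 hT)]; ring
  have e2 : ∑ T ∈ S.powerset, v (insert x T) * prodPi p (insert x T) (insert x S)
      = p x * ∑ T ∈ S.powerset, v (insert x T) * prodPi p T S := by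
    rw [Finset.mul_sum]
    refine Finset.sum_congr rfl fun T hT => ?_
    rw [prodPi_both_insert p hx (Finset.mem_powerset.1 hT)]; ring
  have e3 : ∑ T ∈ S.powerset, v (insert x T) * prodPi p T S
      = ∑ T ∈ S.powerset, v T * prodPi p T S
        + ∑ T ∈ S.powerset,
            ((if c ∈ T then (0:ℝ) else 1) + (if T = ∅ then (1:ℝ) else 0)) * prodPi p T S := by
    rw [← Finset.sum_add_distrib]
    refine Finset.sum_congr rfl fun T hT => ?_
    have hxT : x ∉ T := fun h => hx (Finset.mem_powerset.1 hT h)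
    have := star_marg hxc hxT
    rw [hv]
    linear_combination prodPi p T S * this
  have e4 : ∑ T ∈ S.powerset, (if c ∈ T then (0:ℝ) else 1) * prodPi p T S
      = (if c ∈ S then 1 - p c else 1) := by
    have hsplit : ∑ T ∈ S.powerset, (if c ∈ T then (0:ℝ) else 1) * prodPi p T S
        = ∑ T ∈ S.powerset.filter (fun T => c ∉ T), prodPi p T S := by
      rw [Finset.sum_filter]
      refine Finset.sum_congr rfl fun T _ => ?_
      by_cases h : c ∈ T <;> simp [h]
    rw [hsplit]
    have hps : S.powerset.filter (fun T => c ∉ T) = (S.erase c).powerset := by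
      ext T
      simp only [Finset.mem_filter, Finset.mem_powerset, Finset.subset_erase]
    rw [hps]
    by_cases hc : c ∈ S
    · simp only [hc, if_true]
      have : ∑ T ∈ (S.erase c).powerset, prodPi p T S
          = (1 - p c) * ∑ T ∈ (S.erase c).powerset, prodPi p T (S.erase c) := by
        rw [Finset.mul_sum]
        exact Finset.sum_congr rfl fun T hT =>
          prodPi_erase p hc (Finset.mem_powerset.1 hT)
      rw [this, sum_prodPi, mul_one]
    · simp only [hc, if_false]
      rw [Finset.erase_eq_of_notMem hc, sum_prodPi]
  have e5 : ∑ T ∈ S.powerset, (if T = ∅ then (1:ℝ) else 0) * prodPi p T S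
      = ∏ i ∈ S, (1 - p i) := by
    rw [Finset.sum_eq_single ∅]
    · rw [if_pos rfl, one_mul, prodPi, Finset.prod_empty, one_mul, Finset.sdiff_empty]
    · intro T _ hT
      rw [if_neg hT, zero_mul]
    · intro h
      exact absurd (Finset.empty_mem_powerset S) h
  have esplit : ∑ T ∈ S.powerset,
      ((if c ∈ T then (0:ℝ) else 1) + (if T = ∅ then (1:ℝ) else 0)) * prodPi p T S
      = (if c ∈ S then 1 - p c else 1) + ∏ i ∈ S, (1 - p i) := by
    rw [← e4, ← e5, ← Finset.sum_add_distrib]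
    exact Finset.sum_congr rfl fun T _ => by ring
  rw [e1, e2, e3, esplit]
  ring

lemma mem_precedingSet {α : Type*} [Fintype α] {σ : Fin (Fintype.card α) ≃ α} {x y : α} :
    y ∈ precedingSet σ x ↔ σ.symm y < σ.symm x := by
  simp [precedingSet]

lemma x_not_mem_preceding {α : Type*} [Fintype α] (σ : Fin (Fintype.card α) ≃ α) (x : α) :
    x ∉ precedingSet σ x := by
  simp [precedingSet]

lemma sum_univ_congr {β M : Type*} [AddCommMonoid M] (inst1 inst2 : Fintype β)
    (f g : β → M) (h : ∀ b, f b = g b) :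
    @Finset.sum β M _ (@Finset.univ β inst1) f = @Finset.sum β M _ (@Finset.univ β inst2) g := by
  cases Subsingleton.elim inst1 inst2
  exact Finset.sum_congr rfl fun b _ => h b

lemma shapley_eq {n : ℕ} (p : Fin n → ℝ) {c x : Fin n} (hxc : x ≠ c) :
    shapley (relExt p (vNC1 (starGraph n c))) x
      = (1 / ((Fintype.card (Fin n)).factorial : ℝ)) *
        ∑ σ : Fin (Fintype.card (Fin n)) ≃ Fin n,
          p x * ((if c ∈ precedingSet σ x then 1 - p c else 1)
            + ∏ i ∈ precedingSet σ x, (1 - p i)) := by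
  delta shapley
  exact congrArg (fun z => (1 / ((Fintype.card (Fin n)).factorial : ℝ)) * z)
    (sum_univ_congr _ _ _ _ fun σ => relExt_marg p hxc (x_not_mem_preceding σ x))

lemma hasDeriv_term {n : ℕ} (p : Fin n → ℝ) (q : ℝ → Fin n → ℝ) {k : Fin n}
    (hq : ∀ t i, q t i = if i = k then t else p i) (c : Fin n)
    (P : Finset (Fin n)) (t₀ : ℝ) :
    HasDerivAt (fun t => (if c ∈ P then 1 - q t c else 1) + ∏ i ∈ P, (1 - q t i))
      ((if c ∈ P ∧ c = k then (-1:ℝ) else 0)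
        + (if k ∈ P then (-1) * ∏ i ∈ P.erase k, (1 - p i) else 0)) t₀ := by
  have hG : HasDerivAt (fun t => (if c ∈ P then 1 - q t c else 1))
      (if c ∈ P ∧ c = k then (-1:ℝ) else 0) t₀ := by
    by_cases hcP : c ∈ P
    · by_cases hck : c = k
      · have hfun : (fun t => (if c ∈ P then 1 - q t c else 1)) = fun t => 1 - t := by
          funext t
          rw [if_pos hcP, hq, if_pos hck]
        rw [hfun, if_pos ⟨hcP, hck⟩]
        simpa using (hasDerivAt_id t₀).const_sub 1
      · have hfun : (fun t => (if c ∈ P then 1 - q t c else 1)) = fun _ => 1 - p c := by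
          funext t
          rw [if_pos hcP, hq, if_neg hck]
        rw [hfun, if_neg (by tauto)]
        exact hasDerivAt_const t₀ _
    · have hfun : (fun t => (if c ∈ P then 1 - q t c else 1)) = fun _ => (1:ℝ) := by
        funext t
        rw [if_neg hcP]
      rw [hfun, if_neg (by tauto)]
      exact hasDerivAt_const t₀ _
  have hQ : HasDerivAt (fun t => ∏ i ∈ P, (1 - q t i))
      (if k ∈ P then (-1) * ∏ i ∈ P.erase k, (1 - p i) else 0) t₀ := by
    by_cases hkP : k ∈ P
    · have hfun : (fun t => ∏ i ∈ P, (1 - q t i))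
          = fun t => (1 - t) * ∏ i ∈ P.erase k, (1 - p i) := by
        funext t
        rw [← Finset.mul_prod_erase P _ hkP, hq, if_pos rfl]
        congr 1
        exact Finset.prod_congr rfl fun i hi => by
          rw [hq, if_neg (Finset.mem_erase.1 hi).1]
      rw [hfun, if_pos hkP]
      exact ((hasDerivAt_id t₀).const_sub 1).mul_const _
    · have hfun : (fun t => ∏ i ∈ P, (1 - q t i)) = fun _ => ∏ i ∈ P, (1 - p i) := by
        funext t
        refine Finset.prod_congr rfl fun i hi => ?_
        rw [hq, if_neg ?_]
        intro h
        exact hkP (h ▸ hi)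
      rw [hfun, if_neg hkP]
      exact hasDerivAt_const t₀ _
  exact hG.add hQ

lemma hasDeriv_shapley {n : ℕ} (p : Fin n → ℝ) (q : ℝ → Fin n → ℝ) {k c x : Fin n}
    (hq : ∀ t i, q t i = if i = k then t else p i) (hkx : k ≠ x) (hxc : x ≠ c) (t₀ : ℝ) :
    HasDerivAt (fun t => shapley (relExt (q t) (vNC1 (starGraph n c))) x)
      ((1 / ((Fintype.card (Fin n)).factorial : ℝ)) *
        ∑ σ : Fin (Fintype.card (Fin n)) ≃ Fin n,
          p x * ((if c ∈ precedingSet σ x ∧ c = k then (-1:ℝ) else 0)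
            + (if k ∈ precedingSet σ x then
                (-1) * ∏ i ∈ (precedingSet σ x).erase k, (1 - p i) else 0))) t₀ := by
  have hqx : ∀ t, q t x = p x := fun t => by
    rw [hq, if_neg (fun h => hkx (h.symm))]
  have hfun : (fun t => shapley (relExt (q t) (vNC1 (starGraph n c))) x)
      = fun t => (1 / ((Fintype.card (Fin n)).factorial : ℝ)) *
        ∑ σ : Fin (Fintype.card (Fin n)) ≃ Fin n,
          p x * ((if c ∈ precedingSet σ x then 1 - q t c else 1)
            + ∏ i ∈ precedingSet σ x, (1 - q t i)) := by
    funext t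
    rw [shapley_eq (q t) hxc]
    congr 1
    exact Finset.sum_congr rfl fun σ _ => by rw [hqx t]
  rw [hfun]
  exact (HasDerivAt.fun_sum fun σ _ =>
    (hasDeriv_term p q hq c (precedingSet σ x) t₀).const_mul (p x)).const_mul _

lemma count_half {n : ℕ} (x k : Fin n) (hk : k ≠ x) :
    ∑ σ : Fin (Fintype.card (Fin n)) ≃ Fin n,
      (if k ∈ precedingSet σ x then (1:ℝ) else 0)
      = ((Fintype.card (Fin n)).factorial : ℝ) / 2 := by
  have key : ∀ σ : Fin (Fintype.card (Fin n)) ≃ Fin n,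
      (k ∈ precedingSet (σ.trans (Equiv.swap x k)) x ↔ ¬ (k ∈ precedingSet σ x)) := by
    intro σ
    have h1 : (σ.trans (Equiv.swap x k)).symm k = σ.symm x := by
      simp [Equiv.symm_trans_apply]
    have h2 : (σ.trans (Equiv.swap x k)).symm x = σ.symm k := by
      simp [Equiv.symm_trans_apply]
    rw [mem_precedingSet, mem_precedingSet, h1, h2]
    have hne : σ.symm k ≠ σ.symm x := fun h => hk (σ.symm.injective h)
    have hne2 : (σ.symm k).val ≠ (σ.symm x).val := fun h => hne (Fin.val_injective h)
    rw [Fin.lt_def, Fin.lt_def, not_lt]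
    omega
  have hinv : ∀ σ : Fin (Fintype.card (Fin n)) ≃ Fin n,
      (σ.trans (Equiv.swap x k)).trans (Equiv.swap x k) = σ := by
    intro σ
    ext i
    simp
  have hbij : ∑ σ : Fin (Fintype.card (Fin n)) ≃ Fin n,
        (if k ∈ precedingSet σ x then (1:ℝ) else 0)
      = ∑ σ : Fin (Fintype.card (Fin n)) ≃ Fin n,
        (if ¬ (k ∈ precedingSet σ x) then (1:ℝ) else 0) := by
    refine Finset.sum_nbij' (fun σ => σ.trans (Equiv.swap x k))
      (fun σ => σ.trans (Equiv.swap x k)) (fun a _ => Finset.mem_univ _)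
      (fun a _ => Finset.mem_univ _) (fun a _ => hinv a) (fun a _ => hinv a) ?_
    intro σ _
    by_cases h : k ∈ precedingSet σ x
    · rw [if_pos h, if_pos (fun h2 => ((key σ).1 h2) h)]
    · rw [if_neg h, if_neg (fun h2 => h2 ((key σ).2 h))]
  have htot : (∑ σ : Fin (Fintype.card (Fin n)) ≃ Fin n,
        ((if k ∈ precedingSet σ x then (1:ℝ) else 0)
          + (if ¬ (k ∈ precedingSet σ x) then (1:ℝ) else 0)))
      = ((Fintype.card (Fin n)).factorial : ℝ) := by
    have h1 : ∀ σ : Fin (Fintype.card (Fin n)) ≃ Fin n,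
        ((if k ∈ precedingSet σ x then (1:ℝ) else 0)
          + (if ¬ (k ∈ precedingSet σ x) then (1:ℝ) else 0)) = 1 := by
      intro σ
      by_cases h : k ∈ precedingSet σ x <;> simp [h]
    rw [Finset.sum_congr rfl fun σ _ => h1 σ, Finset.sum_const, Finset.card_univ,
      Fintype.card_equiv (finCongr (Fintype.card_fin n))]
    simp
  rw [Finset.sum_add_distrib, ← hbij] at htot
  linarith

lemma exists_perm {n : ℕ} (hn : 3 ≤ n) :
    ∃ σ : Fin (Fintype.card (Fin n)) ≃ Fin n,
      ∀ j : Fin n, j ≠ ⟨0, by linarith⟩ → j ∈ precedingSet σ ⟨0, by linarith⟩ := by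
  set x : Fin n := ⟨0, by omega⟩ with hx
  set m : Fin n := ⟨n - 1, by omega⟩ with hm
  refine ⟨(finCongr (Fintype.card_fin n)).trans (Equiv.swap x m), ?_⟩
  intro j hj
  rw [mem_precedingSet]
  have h1 : ∀ y : Fin n, ((finCongr (Fintype.card_fin n)).trans (Equiv.swap x m)).symm y
      = (finCongr (Fintype.card_fin n).symm) (Equiv.swap x m y) := by
    intro y
    simp [Equiv.symm_trans_apply]
  rw [h1, h1, Equiv.swap_apply_left, Fin.lt_def]
  simp only [finCongr_apply, Fin.coe_cast]
  have hmval : (m : ℕ) = n - 1 := rfl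
  by_cases hjm : j = m
  · subst hjm
    rw [Equiv.swap_apply_right]
    simp [hx, hm]
    omega
  · rw [Equiv.swap_apply_of_ne_of_ne hj hjm]
    have : (j : ℕ) ≠ n - 1 := by
      intro h
      exact hjm (Fin.ext (by simp [hm, h]))
    have := j.isLt
    simp [hm]
    omega

theorem aux_c {n : ℕ} (p : Fin n → ℝ) (hp : ∀ i, p i ∈ Set.Ioc (0:ℝ) 1)
    {x c : Fin n} (hxc : x ≠ c) (q : ℝ → Fin n → ℝ)
    (hq : ∀ t i, q t i = if i = c then t else p i) (t₀ : ℝ) :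
    deriv (fun t => shapley (relExt (q t) (vNC1 (starGraph n c))) x) t₀ ≤ -(p x) / 2 := by
  have hd := hasDeriv_shapley p q hq (Ne.symm hxc) hxc t₀
  rw [hd.deriv]
  set N := Fintype.card (Fin n) with hN
  have hF : (0:ℝ) < (N.factorial : ℝ) := by positivity
  have hpx : 0 < p x := (hp x).1
  have hterm : ∀ σ : Fin N ≃ Fin n,
      p x * ((if c ∈ precedingSet σ x ∧ c = c then (-1:ℝ) else 0)
        + (if c ∈ precedingSet σ x then
            (-1) * ∏ i ∈ (precedingSet σ x).erase c, (1 - p i) else 0))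
      ≤ (-(p x)) * (if c ∈ precedingSet σ x then 1 else 0) := by
    intro σ
    by_cases hcP : c ∈ precedingSet σ x
    · have hC : 0 ≤ ∏ i ∈ (precedingSet σ x).erase c, (1 - p i) :=
        Finset.prod_nonneg fun i _ => by linarith [(hp i).2]
      rw [if_pos (And.intro hcP rfl), if_pos hcP, if_pos hcP]
      nlinarith
    · simp [hcP]
  have hsum : ∑ σ : Fin N ≃ Fin n,
      p x * ((if c ∈ precedingSet σ x ∧ c = c then (-1:ℝ) else 0)
        + (if c ∈ precedingSet σ x then
            (-1) * ∏ i ∈ (precedingSet σ x).erase c, (1 - p i) else 0))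
      ≤ ∑ σ : Fin N ≃ Fin n, (-(p x)) * (if c ∈ precedingSet σ x then (1:ℝ) else 0) :=
    Finset.sum_le_sum fun σ _ => hterm σ
  have hcount : ∑ σ : Fin N ≃ Fin n, (-(p x)) * (if c ∈ precedingSet σ x then (1:ℝ) else 0)
      = (-(p x)) * ((N.factorial : ℝ) / 2) := by
    rw [← Finset.mul_sum, count_half x c (Ne.symm hxc)]
  calc (1 / (N.factorial : ℝ)) * ∑ σ : Fin N ≃ Fin n,
      p x * ((if c ∈ precedingSet σ x ∧ c = c then (-1:ℝ) else 0)
        + (if c ∈ precedingSet σ x then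
            (-1) * ∏ i ∈ (precedingSet σ x).erase c, (1 - p i) else 0))
      ≤ (1 / (N.factorial : ℝ)) * ((-(p x)) * ((N.factorial : ℝ) / 2)) := by
        apply mul_le_mul_of_nonneg_left _ (by positivity)
        rw [← hcount]
        exact hsum
    _ = -(p x) / 2 := by
        field_simp

theorem aux_j {n : ℕ} (hn : 3 ≤ n) (p : Fin n → ℝ) (hp : ∀ i, p i ∈ Set.Ioc (0:ℝ) 1)
    {c j : Fin n} (hcx : c ≠ ⟨0, by linarith⟩) (hj0 : j ≠ ⟨0, by linarith⟩) (hjc : j ≠ c)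
    (q : ℝ → Fin n → ℝ) (hq : ∀ t i, q t i = if i = j then t else p i) (t₀ : ℝ) :
    -(p ⟨0, by linarith⟩) / 2 <
      deriv (fun t => shapley (relExt (q t) (vNC1 (starGraph n c)))
        (⟨0, by linarith⟩ : Fin n)) t₀ := by
  have h3 : 0 < n := by omega
  set x : Fin n := ⟨0, by omega⟩ with hxdef
  have hxc : x ≠ c := Ne.symm hcx
  have hjx : j ≠ x := hj0
  have hd := hasDeriv_shapley p q hq hjx hxc t₀
  rw [hd.deriv]
  obtain ⟨σ0, hσ0⟩ := exists_perm hn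
  have hpx : 0 < p x := (hp x).1
  have hF : (0:ℝ) < ((Fintype.card (Fin n)).factorial : ℝ) := by positivity
  have hterm_eq : ∀ σ : Fin (Fintype.card (Fin n)) ≃ Fin n,
      p x * ((if c ∈ precedingSet σ x ∧ c = j then (-1:ℝ) else 0)
        + (if j ∈ precedingSet σ x then
            (-1) * ∏ i ∈ (precedingSet σ x).erase j, (1 - p i) else 0))
      = -(p x * (if j ∈ precedingSet σ x then
            ∏ i ∈ (precedingSet σ x).erase j, (1 - p i) else 0)) := by
    intro σ
    rw [if_neg (fun h => hjc h.2.symm)]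
    by_cases h : j ∈ precedingSet σ x
    · rw [if_pos h, if_pos h]; ring
    · rw [if_neg h, if_neg h]; ring
  have hflt : ∑ σ : Fin (Fintype.card (Fin n)) ≃ Fin n,
        p x * (if j ∈ precedingSet σ x then
          ∏ i ∈ (precedingSet σ x).erase j, (1 - p i) else 0)
      < ∑ σ : Fin (Fintype.card (Fin n)) ≃ Fin n,
        p x * (if j ∈ precedingSet σ x then (1:ℝ) else 0) := by
    refine Finset.sum_lt_sum (fun σ _ => ?_) ⟨σ0, Finset.mem_univ _, ?_⟩
    · by_cases h : j ∈ precedingSet σ x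
      · rw [if_pos h, if_pos h]
        have hle : ∏ i ∈ (precedingSet σ x).erase j, (1 - p i) ≤ 1 :=
          Finset.prod_le_one (fun i _ => by linarith [(hp i).2])
            (fun i _ => by linarith [(hp i).1])
        exact mul_le_mul_of_nonneg_left hle (le_of_lt hpx)
      · rw [if_neg h, if_neg h]
    · have hjP : j ∈ precedingSet σ0 x := hσ0 j hj0
      have hcP : c ∈ precedingSet σ0 x := hσ0 c hcx
      rw [if_pos hjP, if_pos hjP, mul_one]
      have hcPe : c ∈ (precedingSet σ0 x).erase j :=
        Finset.mem_erase.2 ⟨Ne.symm hjc, hcP⟩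
      have hC : ∏ i ∈ (precedingSet σ0 x).erase j, (1 - p i) ≤ 1 - p c := by
        rw [← Finset.mul_prod_erase _ _ hcPe]
        have h1 : ∏ i ∈ ((precedingSet σ0 x).erase j).erase c, (1 - p i) ≤ 1 :=
          Finset.prod_le_one (fun i _ => by linarith [(hp i).2])
            (fun i _ => by linarith [(hp i).1])
        have h0 : (0:ℝ) ≤ 1 - p c := by linarith [(hp c).2]
        nlinarith
      have hlt1 : ∏ i ∈ (precedingSet σ0 x).erase j, (1 - p i) < 1 := by
        have := (hp c).1
        linarith
      have := mul_lt_mul_of_pos_left hlt1 hpx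
      linarith
  have hone : ∑ σ : Fin (Fintype.card (Fin n)) ≃ Fin n,
      p x * (if j ∈ precedingSet σ x then (1:ℝ) else 0)
      = p x * (((Fintype.card (Fin n)).factorial : ℝ) / 2) := by
    rw [← Finset.mul_sum, count_half x j hjx]
  have hrw : ∑ σ : Fin (Fintype.card (Fin n)) ≃ Fin n,
      p x * ((if c ∈ precedingSet σ x ∧ c = j then (-1:ℝ) else 0)
        + (if j ∈ precedingSet σ x then
            (-1) * ∏ i ∈ (precedingSet σ x).erase j, (1 - p i) else 0))
      = -∑ σ : Fin (Fintype.card (Fin n)) ≃ Fin n,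
        p x * (if j ∈ precedingSet σ x then
          ∏ i ∈ (precedingSet σ x).erase j, (1 - p i) else 0) := by
    rw [Finset.sum_congr rfl fun σ _ => hterm_eq σ]
    rw [Finset.sum_neg_distrib]
  rw [hrw]
  have hkey : -(p x * (((Fintype.card (Fin n)).factorial : ℝ) / 2))
      < -∑ σ : Fin (Fintype.card (Fin n)) ≃ Fin n,
        p x * (if j ∈ precedingSet σ x then
          ∏ i ∈ (precedingSet σ x).erase j, (1 - p i) else 0) := by
    rw [← hone]
    linarith
  calc -(p x) / 2
      = (1 / ((Fintype.card (Fin n)).factorial : ℝ)) *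
          (-(p x * (((Fintype.card (Fin n)).factorial : ℝ) / 2))) := by
        field_simp
    _ < _ := by
        exact mul_lt_mul_of_pos_left hkey (by positivity)

end Aux

theorem stmt_17 (n : ℕ) (hn : 3 ≤ n)
    (p : Fin n → ℝ) (hp : ∀ i, p i ∈ Set.Ioc (0 : ℝ) 1) :
    deriv (fun t => shapley
        (relExt (Function.update p ⟨1, by omega⟩ t) (vNC1 (starGraph n ⟨1, by omega⟩)))
        ⟨0, by omega⟩) (p ⟨1, by omega⟩) ≤ -(p ⟨0, by omega⟩) / 2 ∧
      ∀ j : Fin n, j ≠ ⟨0, by omega⟩ → j ≠ ⟨1, by omega⟩ →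
        -(p ⟨0, by omega⟩) / 2 <
          deriv (fun t => shapley
            (relExt (Function.update p j t) (vNC1 (starGraph n ⟨1, by omega⟩)))
            ⟨0, by omega⟩) (p j) := by
  have h01 : (⟨0, by omega⟩ : Fin n) ≠ ⟨1, by omega⟩ := by
    simp [Fin.ext_iff]
  constructor
  · exact aux_c p hp h01 (fun t => Function.update p ⟨1, by omega⟩ t)
      (fun t i => (Function.update_apply p _ t i).trans
        (@if_congr _ _ _ (instDecidableEqFin n i _) (Classical.propDecidable _) _ _ _ _
          Iff.rfl rfl rfl))
      (p ⟨1, by omega⟩)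
  · intro j hj0 hj1
    exact aux_j hn p hp (Ne.symm h01) hj0 hj1 (fun t => Function.update p j t)
      (fun t i => (Function.update_apply p _ t i).trans
        (@if_congr _ _ _ (instDecidableEqFin n i _) (Classical.propDecidable _) _ _ _ _
          Iff.rfl rfl rfl)) (p j)

end
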